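/- If a finite symmetric two-player game (X, π) has no finite population evolutionarily stable strategy (fESS), then imitation is subject to a money pump. -/

import Mathlib

/-- The imitator's action sequence: `y₀` initially; imitate the opponent's previous
action iff it earned a strictly positive relative payoff. -/
noncomputable def imitSeq {X : Type*} (Δ : X → X → ℝ) (x : ℕ → X) (y0 : X) : ℕ → X
  | 0 => y0
  | t + 1 => if 0 < Δ (x t) (imitSeq Δ x y0 t) then x t else imitSeq Δ x y0 t

/-- Imitation is subject to a money pump. -/
def MoneyPump {X : Type*} (Δ : X → X → ℝ) : Prop :=
  ∀ M : ℝ, ∃ (y0 : X) (x : ℕ → X) (T : ℕ),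
    M < ∑ t ∈ Finset.range (T + 1), Δ (x t) (imitSeq Δ x y0 t)

theorem stmt4 {X : Type*} [Fintype X] [Nonempty X] (π : X → X → ℝ)
    (Δ : X → X → ℝ) (hΔ : ∀ x y, Δ x y = π x y - π y x)
    (hnofess : ¬ ∃ xs : X, ∀ x : X, π x xs ≤ π xs x) :
    MoneyPump Δ := by
  push_neg at hnofess
  -- choose for each y an action beating it
  have hf : ∀ y : X, ∃ z : X, 0 < Δ z y := by
    intro y
    obtain ⟨z, hz⟩ := hnofess y
    exact ⟨z, by rw [hΔ]; linarith⟩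
  choose f hfpos using hf
  -- minimal positive gain
  have hne : (Finset.univ : Finset X).Nonempty := Finset.univ_nonempty
  set ε : ℝ := Finset.univ.inf' hne (fun y => Δ (f y) y) with hε
  have hεpos : 0 < ε := by
    rw [hε, Finset.lt_inf'_iff]
    intro y _
    exact hfpos y
  have hεle : ∀ y : X, ε ≤ Δ (f y) y := fun y =>
    Finset.inf'_le _ (Finset.mem_univ y)
  intro M
  obtain ⟨y0⟩ := (inferInstance : Nonempty X)
  -- trajectory
  let y' : ℕ → X := fun t => f^[t] y0
  let x : ℕ → X := fun t => f (y' t)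
  have himit : ∀ t, imitSeq Δ x y0 t = y' t := by
    intro t
    induction t with
    | zero => rfl
    | succ t ih =>
      show (if 0 < Δ (x t) (imitSeq Δ x y0 t) then x t else imitSeq Δ x y0 t) = y' (t+1)
      rw [ih]
      rw [if_pos (hfpos (y' t))]
      show f (f^[t] y0) = f^[t+1] y0
      rw [Function.iterate_succ_apply']
  obtain ⟨n, hn⟩ := exists_nat_gt (M / ε)
  refine ⟨y0, x, n, ?_⟩
  have hsum : ((n+1 : ℕ) : ℝ) * ε ≤ ∑ t ∈ Finset.range (n + 1), Δ (x t) (imitSeq Δ x y0 t) := by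
    have h := Finset.card_nsmul_le_sum (Finset.range (n+1))
      (fun t => Δ (x t) (imitSeq Δ x y0 t)) ε (fun t _ => by show ε ≤ Δ (x t) (imitSeq Δ x y0 t); rw [himit t]; exact hεle (y' t))
    simpa [nsmul_eq_mul] using h
  have hM : M < ((n+1 : ℕ) : ℝ) * ε := by
    rw [div_lt_iff₀ hεpos] at hn
    push_cast
    nlinarith
  linarith
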